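/- Let n ∈ ℕ, let p₁,…,pₙ be nonnegative reals with p₁+⋯+pₙ ≤ 1, set p_{n+1} := 1 − (p₁+⋯+pₙ), let v⁻₁,…,v⁻ₙ and v⁺₁,…,v⁺ₙ be real numbers, and let a⁻ < a⁺ be real numbers. For α ∈ [0,1] define Q⁺_α := inf{ t ∈ ℝ : Σ_{i : v⁺ᵢ ≤ t} pᵢ ≥ 1−α } (with inf ∅ = +∞) and Q⁻_α := sup{ t ∈ ℝ : Σ_{i : v⁻ᵢ ≥ t} pᵢ ≥ 1−α } (with sup ∅ = −∞). Then the set { α ∈ [0,1] : a⁻ ≤ Q⁻_α and Q⁺_α ≤ a⁺ } is nonempty and has a minimum, and this minimum equals max( p_{n+1} + Σ_{i : v⁻ᵢ < a⁻} pᵢ , p_{n+1} + Σ_{i : v⁺ᵢ > a⁺} pᵢ ) = max( 1 − Σ_{i : v⁻ᵢ ≥ a⁻} pᵢ , 1 − Σ_{i : v⁺ᵢ ≤ a⁺} pᵢ ). -/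
import Mathlib


open scoped BigOperators

/-- Weighted upper quantile `Q⁺_α` (in `EReal`, with `inf ∅ = +∞`). -/
noncomputable def wQplus {n : ℕ} (p : Fin n → ℝ) (vp : Fin n → ℝ) (α : ℝ) : EReal :=
  sInf ((fun t : ℝ => (t : EReal)) '' {t : ℝ | 1 - α ≤ ∑ i, if vp i ≤ t then p i else 0})

/-- Weighted lower quantile `Q⁻_α` (in `EReal`, with `sup ∅ = -∞`). -/
noncomputable def wQminus {n : ℕ} (p : Fin n → ℝ) (vm : Fin n → ℝ) (α : ℝ) : EReal :=
  sSup ((fun t : ℝ => (t : EReal)) '' {t : ℝ | 1 - α ≤ ∑ i, if t ≤ vm i then p i else 0})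

/-- Closed-form solution for the minimal miscoverage level: the set of levels
`α ∈ [0,1]` for which the weighted conformal interval `[Q⁻_α, Q⁺_α]` is contained in
the pre-defined interval `[a⁻, a⁺]` is nonempty and has a least element, namely
`max(p_{n+1} + Σ_{i : v⁻ᵢ < a⁻} pᵢ, p_{n+1} + Σ_{i : v⁺ᵢ > a⁺} pᵢ)` where
`p_{n+1} = 1 - Σᵢ pᵢ`; moreover this value equals
`max(1 - Σ_{i : v⁻ᵢ ≥ a⁻} pᵢ, 1 - Σ_{i : v⁺ᵢ ≤ a⁺} pᵢ)`. -/

lemma wQplus_le_iff' {n : ℕ} (p vp : Fin n → ℝ) (hp : ∀ i, 0 ≤ p i) (α a : ℝ) :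
    (sInf ((fun t : ℝ => (t : EReal)) '' {t : ℝ | 1 - α ≤ ∑ i, if vp i ≤ t then p i else 0})
      ≤ (a : EReal)) ↔ 1 - α ≤ ∑ i, if vp i ≤ a then p i else 0 := by
  constructor
  · intro h
    obtain ⟨ε, hε, hεspec⟩ : ∃ ε > 0, ∀ i, a < vp i → a + ε ≤ vp i := by
      by_cases hF : (Finset.univ.filter (fun i => a < vp i)).Nonempty
      · obtain ⟨j, hj, hjmin⟩ := Finset.exists_min_image _ (fun i => vp i) hF
        have hj' : a < vp j := (Finset.mem_filter.mp hj).2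
        refine ⟨vp j - a, by linarith, fun i hi => ?_⟩
        have : vp j ≤ vp i := hjmin i (by simp [hi])
        linarith
      · have hall : ∀ i, ¬ a < vp i := by
          simpa [Finset.filter_eq_empty_iff] using Finset.not_nonempty_iff_eq_empty.mp hF
        exact ⟨1, one_pos, fun i hi => absurd hi (hall i)⟩
    have hlt : sInf ((fun t : ℝ => (t : EReal)) '' {t : ℝ | 1 - α ≤ ∑ i, if vp i ≤ t then p i else 0})
        < ((a + ε : ℝ) : EReal) :=
      lt_of_le_of_lt h (by exact_mod_cast (by linarith : a < a + ε))
    rw [sInf_lt_iff] at hlt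
    obtain ⟨x, hx, hxlt⟩ := hlt
    obtain ⟨t, ht, rfl⟩ := hx
    have hxlt' : (t : EReal) < ((a + ε : ℝ) : EReal) := hxlt
    have htlt : t < a + ε := by exact_mod_cast hxlt'
    refine le_trans ht (Finset.sum_le_sum fun i _ => ?_)
    split_ifs with h1 h2
    · exact le_rfl
    · exact absurd (hεspec i (lt_of_not_ge h2)) (by linarith)
    · exact hp i
    · exact le_rfl
  · intro h
    exact sInf_le ⟨a, h, rfl⟩

lemma wQminus_ge_iff' {n : ℕ} (p vm : Fin n → ℝ) (hp : ∀ i, 0 ≤ p i) (α a : ℝ) :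
    ((a : EReal) ≤ sSup ((fun t : ℝ => (t : EReal)) '' {t : ℝ | 1 - α ≤ ∑ i, if t ≤ vm i then p i else 0}))
      ↔ 1 - α ≤ ∑ i, if a ≤ vm i then p i else 0 := by
  constructor
  · intro h
    obtain ⟨ε, hε, hεspec⟩ : ∃ ε > 0, ∀ i, vm i < a → vm i ≤ a - ε := by
      by_cases hF : (Finset.univ.filter (fun i => vm i < a)).Nonempty
      · obtain ⟨j, hj, hjmax⟩ := Finset.exists_max_image _ (fun i => vm i) hF
        have hj' : vm j < a := (Finset.mem_filter.mp hj).2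
        refine ⟨a - vm j, by linarith, fun i hi => ?_⟩
        have : vm i ≤ vm j := hjmax i (by simp [hi])
        linarith
      · have hall : ∀ i, ¬ vm i < a := by
          simpa [Finset.filter_eq_empty_iff] using Finset.not_nonempty_iff_eq_empty.mp hF
        exact ⟨1, one_pos, fun i hi => absurd hi (hall i)⟩
    have hlt : ((a - ε : ℝ) : EReal)
        < sSup ((fun t : ℝ => (t : EReal)) '' {t : ℝ | 1 - α ≤ ∑ i, if t ≤ vm i then p i else 0}) :=
      lt_of_lt_of_le (by exact_mod_cast (by linarith : a - ε < a)) h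
    rw [lt_sSup_iff] at hlt
    obtain ⟨x, hx, hxlt⟩ := hlt
    obtain ⟨t, ht, rfl⟩ := hx
    have hxlt' : ((a - ε : ℝ) : EReal) < (t : EReal) := hxlt
    have htlt : a - ε < t := by exact_mod_cast hxlt'
    refine le_trans ht (Finset.sum_le_sum fun i _ => ?_)
    split_ifs with h1 h2
    · exact le_rfl
    · exact absurd (hεspec i (lt_of_not_ge h2)) (by linarith)
    · exact hp i
    · exact le_rfl
  · intro h
    exact le_sSup ⟨a, h, rfl⟩

theorem minimal_miscoverage_closed_form {n : ℕ} (p : Fin n → ℝ) (hp : ∀ i, 0 ≤ p i)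
    (hps : ∑ i, p i ≤ 1) (vm vp : Fin n → ℝ) (am ap : ℝ) (ha : am < ap) :
    IsLeast {α : ℝ | α ∈ Set.Icc (0 : ℝ) 1 ∧ (am : EReal) ≤ wQminus p vm α ∧
        wQplus p vp α ≤ (ap : EReal)}
      (max ((1 - ∑ i, p i) + ∑ i, if vm i < am then p i else 0)
           ((1 - ∑ i, p i) + ∑ i, if ap < vp i then p i else 0)) ∧
    max ((1 - ∑ i, p i) + ∑ i, if vm i < am then p i else 0)
        ((1 - ∑ i, p i) + ∑ i, if ap < vp i then p i else 0) =
      max (1 - ∑ i, if am ≤ vm i then p i else 0)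
          (1 - ∑ i, if vp i ≤ ap then p i else 0) := by
  set Sm : ℝ := ∑ i, if am ≤ vm i then p i else 0 with hSmdef
  set Sp : ℝ := ∑ i, if vp i ≤ ap then p i else 0 with hSpdef
  have hsum_m : (∑ i, if vm i < am then p i else 0) + Sm = ∑ i, p i := by
    rw [hSmdef, ← Finset.sum_add_distrib]
    refine Finset.sum_congr rfl fun i _ => ?_
    rcases lt_or_ge (vm i) am with h | h
    · simp [h, not_le.mpr h]
    · simp [h, not_lt.mpr h]
  have hsum_p : (∑ i, if ap < vp i then p i else 0) + Sp = ∑ i, p i := by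
    rw [hSpdef, ← Finset.sum_add_distrib]
    refine Finset.sum_congr rfl fun i _ => ?_
    rcases lt_or_ge ap (vp i) with h | h
    · simp [h, not_le.mpr h]
    · simp [h, not_lt.mpr h]
  have heqm : (1 - ∑ i, p i) + (∑ i, if vm i < am then p i else 0) = 1 - Sm := by linarith
  have heqp : (1 - ∑ i, p i) + (∑ i, if ap < vp i then p i else 0) = 1 - Sp := by linarith
  have hSm0 : 0 ≤ Sm := Finset.sum_nonneg fun i _ => by split_ifs <;> [exact hp i; exact le_rfl]
  have hSp0 : 0 ≤ Sp := Finset.sum_nonneg fun i _ => by split_ifs <;> [exact hp i; exact le_rfl]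
  have hSm1 : Sm ≤ ∑ i, p i := Finset.sum_le_sum fun i _ => by split_ifs <;> [exact le_rfl; exact hp i]
  have hSp1 : Sp ≤ ∑ i, p i := Finset.sum_le_sum fun i _ => by split_ifs <;> [exact le_rfl; exact hp i]
  rw [heqm, heqp]
  refine ⟨⟨⟨⟨?_, ?_⟩, ?_, ?_⟩, ?_⟩, rfl⟩
  · -- 0 ≤ max
    exact le_trans (by linarith) (le_max_left (1 - Sm) (1 - Sp))
  · -- max ≤ 1
    exact max_le (by linarith) (by linarith)
  · -- am ≤ wQminus at α = max
    rw [wQminus, wQminus_ge_iff' p vm hp]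
    have : 1 - Sm ≤ max (1 - Sm) (1 - Sp) := le_max_left _ _
    linarith
  · rw [wQplus, wQplus_le_iff' p vp hp]
    have : 1 - Sp ≤ max (1 - Sm) (1 - Sp) := le_max_right _ _
    linarith
  · -- lower bound
    rintro α ⟨⟨h0, h1⟩, hm, hpl⟩
    rw [wQminus, wQminus_ge_iff' p vm hp] at hm
    rw [wQplus, wQplus_le_iff' p vp hp] at hpl
    exact max_le (by linarith) (by linarith)
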